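/- Let W_p ≥ 0 and W_n ∈ ℝ with W_p + W_n ≥ 0 and (W_p, W_n) ≠ (0, 0), and define g : ℝ → ℝ by g(v) = W_p·(1−v)² + max{0, W_n·(1+v)²}. Then g attains its minimum over ℝ at the point v = (W_p − max{0, W_n})/(W_p + max{0, W_n}); in particular the minimizer is 1 when W_n ≤ 0 and is 2v* − 1 with v* = W_p/(W_p + W_n) when W_n > 0. (Minimizer in Proposition 2(a): the optimal constant prediction for the nnPU risk estimator under the quadratic loss.) -/

import Mathlib

/-- Minimizer in Proposition 2(a): the nnPU quadratic objective
`g v = Wp*(1-v)^2 + max{0, Wn*(1+v)^2}` attains its minimum at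
`v = (Wp - max 0 Wn)/(Wp + max 0 Wn)`; in particular the minimizer is `1` when
`Wn ≤ 0` and `2v* - 1` with `v* = Wp/(Wp+Wn)` when `Wn > 0`. -/
theorem nnPU_quad_minimizer (Wp Wn : ℝ) (hWp : 0 ≤ Wp) (hsum : 0 ≤ Wp + Wn)
    (hne : ¬(Wp = 0 ∧ Wn = 0)) :
    (∀ u : ℝ,
        Wp * (1 - (Wp - max 0 Wn) / (Wp + max 0 Wn)) ^ 2
            + max 0 (Wn * (1 + (Wp - max 0 Wn) / (Wp + max 0 Wn)) ^ 2) ≤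
          Wp * (1 - u) ^ 2 + max 0 (Wn * (1 + u) ^ 2)) ∧
    (Wn ≤ 0 → (Wp - max 0 Wn) / (Wp + max 0 Wn) = 1) ∧
    (0 < Wn → (Wp - max 0 Wn) / (Wp + max 0 Wn) = 2 * (Wp / (Wp + Wn)) - 1) := by
  rcases le_or_gt Wn 0 with hWn | hWn
  · have hmax : max 0 Wn = 0 := max_eq_left hWn
    have hWp' : 0 < Wp := by
      rcases hWp.lt_or_eq with h | h
      · exact h
      · exfalso; apply hne; constructor <;> nlinarith
    have hv : (Wp - max 0 Wn) / (Wp + max 0 Wn) = 1 := by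
      rw [hmax]; field_simp; ring
    refine ⟨fun u => ?_, fun _ => hv, fun h => absurd h (not_lt.2 hWn)⟩
    rw [hv]
    have h1 : Wp * (1 - 1) ^ 2 = 0 := by ring
    have h2 : Wn * (1 + 1) ^ 2 ≤ 0 := by nlinarith
    rw [h1, max_eq_left h2]
    have : 0 ≤ Wp * (1 - u) ^ 2 := by positivity
    have : (0:ℝ) ≤ max 0 (Wn * (1 + u) ^ 2) := le_max_left _ _
    simp only [zero_add]
    linarith
  · have hmax : max 0 Wn = Wn := max_eq_right hWn.le
    have hS : 0 < Wp + Wn := by linarith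
    have hv2 : (Wp - max 0 Wn) / (Wp + max 0 Wn) = 2 * (Wp / (Wp + Wn)) - 1 := by
      rw [hmax]; field_simp; ring
    refine ⟨fun u => ?_, fun h => absurd hWn (not_lt.2 h), fun _ => hv2⟩
    rw [hmax]
    set v := (Wp - Wn) / (Wp + Wn) with hv
    have hvid : v * (Wp + Wn) = Wp - Wn := div_mul_cancel₀ _ hS.ne'
    have h1 : max 0 (Wn * (1 + v) ^ 2) = Wn * (1 + v) ^ 2 :=
      max_eq_right (by positivity)
    have h2 : Wn * (1 + u) ^ 2 ≤ max 0 (Wn * (1 + u) ^ 2) := le_max_right _ _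
    rw [h1]
    have key : Wp * (1 - v) ^ 2 + Wn * (1 + v) ^ 2 ≤ Wp * (1 - u) ^ 2 + Wn * (1 + u) ^ 2 := by
      nlinarith [mul_nonneg hS.le (sq_nonneg (u - v)), hvid, sq_nonneg (u - v)]
    linarith
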